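/- For every k ∈ ℤ and ℓ ∈ ℕ, the function V_{k,ℓ}(x) = r^{|k|} e^{−B₀r²/4} P_{k,ℓ}(B₀r²/2) e^{ikθ} (in polar coordinates x = (r cos θ, r sin θ)) is a nonzero element of L²(ℝ²) and satisfies, at every x ≠ 0, the eigenvalue equation −ΔV_{k,ℓ} + iB₀(x₁∂₂V_{k,ℓ} − x₂∂₁V_{k,ℓ}) + (B₀²/4)|x|² V_{k,ℓ} = (2ℓ + 1 + |k| − k) B₀ · V_{k,ℓ}. Moreover, the set of these eigenvalues {(2ℓ + 1 + |k| − k)B₀ : k ∈ ℤ, ℓ ∈ ℕ} equals the set of Landau levels {(2n+1)B₀ : n ∈ ℕ}. -/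

import Mathlib

open MeasureTheory Real Set

/-- Pochhammer symbol `(a)_n = a(a+1)⋯(a+n−1)`, with `(a)₀ = 1`. -/
noncomputable def poch (a : ℝ) (n : ℕ) : ℝ := ∏ i ∈ Finset.range n, (a + i)

/-- The polynomial `P_{k,ℓ}(s) = Σ_{n=0}^{ℓ} ((−ℓ)_n/((1+|k|)_n)) sⁿ/n!`. -/
noncomputable def Pkl (k : ℤ) (ℓ : ℕ) (s : ℝ) : ℝ :=
  ∑ n ∈ Finset.range (ℓ + 1),
    poch (-(ℓ : ℝ)) n / poch (1 + (k.natAbs : ℝ)) n * s ^ n / (n.factorial : ℝ)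

/-- The eigenfunction `V_{k,ℓ}(x) = r^{|k|} e^{−B₀r²/4} P_{k,ℓ}(B₀r²/2) e^{ikθ}` of the Landau
Hamiltonian, written in Cartesian coordinates via `r = |x|`, `e^{iθ} = (x₁+ix₂)/|x|`. -/
noncomputable def Vkl (B₀ : ℝ) (k : ℤ) (ℓ : ℕ) (x : ℝ × ℝ) : ℂ :=
  (((Real.sqrt (x.1 ^ 2 + x.2 ^ 2)) ^ k.natAbs * Real.exp (-(B₀ * (x.1 ^ 2 + x.2 ^ 2)) / 4) *
      Pkl k ℓ (B₀ * (x.1 ^ 2 + x.2 ^ 2) / 2) : ℝ) : ℂ) *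
    (((x.1 : ℂ) + (x.2 : ℂ) * Complex.I) / ((Real.sqrt (x.1 ^ 2 + x.2 ^ 2) : ℝ) : ℂ)) ^ k

namespace Landau

noncomputable def coefa (k : ℤ) (ℓ : ℕ) (n : ℕ) : ℝ :=
  poch (-(ℓ : ℝ)) n / poch (1 + (k.natAbs : ℝ)) n / (n.factorial : ℝ)

lemma Pkl_eq (k : ℤ) (ℓ : ℕ) (s : ℝ) :
    Pkl k ℓ s = ∑ n ∈ Finset.range (ℓ + 1), coefa k ℓ n * s ^ n := by
  unfold Pkl coefa
  exact Finset.sum_congr rfl fun n _ => by ring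

lemma poch_pos (m : ℕ) (n : ℕ) : 0 < poch (1 + (m : ℝ)) n := by
  unfold poch
  exact Finset.prod_pos fun i _ => by positivity

lemma coefa_rec (k : ℤ) (ℓ : ℕ) (n : ℕ) :
    ((n : ℝ) + 1) * ((1 + (k.natAbs : ℝ)) + n) * coefa k ℓ (n + 1)
      = ((n : ℝ) - ℓ) * coefa k ℓ n := by
  unfold coefa poch
  rw [Finset.prod_range_succ, Finset.prod_range_succ, Nat.factorial_succ]
  have h1 : (0:ℝ) < ∏ i ∈ Finset.range n, (1 + (k.natAbs : ℝ) + i) := poch_pos k.natAbs n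
  have h2 : (0:ℝ) < (n.factorial : ℝ) := by positivity
  have h3 : (0:ℝ) < 1 + (k.natAbs : ℝ) + n := by positivity
  field_simp
  push_cast
  ring


noncomputable def P1 (k : ℤ) (ℓ : ℕ) (s : ℝ) : ℝ :=
  ∑ n ∈ Finset.range (ℓ + 1), (n : ℝ) * coefa k ℓ n * s ^ (n - 1)

noncomputable def P2 (k : ℤ) (ℓ : ℕ) (s : ℝ) : ℝ :=
  ∑ n ∈ Finset.range (ℓ + 1), (n : ℝ) * ((n - 1 : ℕ) : ℝ) * coefa k ℓ n * s ^ (n - 1 - 1)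

lemma hasDerivAt_Pkl (k : ℤ) (ℓ : ℕ) (s : ℝ) :
    HasDerivAt (fun s => Pkl k ℓ s) (P1 k ℓ s) s := by
  have : (fun s => Pkl k ℓ s) = fun s => ∑ n ∈ Finset.range (ℓ + 1), coefa k ℓ n * s ^ n :=
    funext fun s => Pkl_eq k ℓ s
  rw [this]
  unfold P1
  apply HasDerivAt.fun_sum
  intro n _
  simpa [mul_comm, mul_assoc, mul_left_comm] using (hasDerivAt_pow n s).const_mul (coefa k ℓ n)

lemma hasDerivAt_P1 (k : ℤ) (ℓ : ℕ) (s : ℝ) :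
    HasDerivAt (fun s => P1 k ℓ s) (P2 k ℓ s) s := by
  unfold P1 P2
  apply HasDerivAt.fun_sum
  intro n _
  simpa [mul_comm, mul_assoc, mul_left_comm] using
    (hasDerivAt_pow (n - 1) s).const_mul ((n : ℝ) * coefa k ℓ n)

lemma kummer (k : ℤ) (ℓ : ℕ) (s : ℝ) :
    s * P2 k ℓ s + ((1 + (k.natAbs : ℝ)) - s) * P1 k ℓ s + (ℓ : ℝ) * Pkl k ℓ s = 0 := by
  unfold P1 P2
  rw [Pkl_eq]
  set m := k.natAbs
  set a : ℕ → ℝ := coefa k ℓ with ha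
  have key : ∀ s : ℝ,
      s * (∑ n ∈ Finset.range (ℓ + 1), (n : ℝ) * ((n - 1 : ℕ) : ℝ) * a n * s ^ (n - 1 - 1))
        + (1 + (m : ℝ)) * (∑ n ∈ Finset.range (ℓ + 1), (n : ℝ) * a n * s ^ (n - 1))
        = ∑ n ∈ Finset.range ℓ, ((n : ℝ) - ℓ) * a n * s ^ n := by
    intro s
    rw [Finset.mul_sum, Finset.mul_sum, ← Finset.sum_add_distrib]
    have step1 : ∀ n ∈ Finset.range (ℓ + 1),
        s * ((n : ℝ) * ((n - 1 : ℕ) : ℝ) * a n * s ^ (n - 1 - 1))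
          + (1 + (m : ℝ)) * ((n : ℝ) * a n * s ^ (n - 1))
        = (n : ℝ) * ((n : ℝ) + (m : ℝ)) * a n * s ^ (n - 1) := by
      intro n _
      match n with
      | 0 => simp
      | 1 => push_cast; ring
      | (j + 2) =>
        show s * ((((j:ℕ)+2 : ℕ) : ℝ) * (((j+1 : ℕ)) : ℝ) * a (j+2) * s ^ j)
            + (1 + (m : ℝ)) * ((((j+2 : ℕ)) : ℝ) * a (j+2) * s ^ (j+1)) = _
        push_cast
        ring
    rw [Finset.sum_congr rfl step1, Finset.sum_range_succ']
    simp only [Nat.cast_zero, zero_mul, add_zero, zero_add, mul_zero, zero_mul]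
    apply Finset.sum_congr rfl
    intro j _
    have h1 : (j + 1 : ℕ) - 1 = j := rfl
    rw [h1]
    have h := coefa_rec k ℓ j
    push_cast
    push_cast at h
    linear_combination s ^ j * h
  have key2 :
      (ℓ : ℝ) * (∑ n ∈ Finset.range (ℓ + 1), a n * s ^ n)
        - s * (∑ n ∈ Finset.range (ℓ + 1), (n : ℝ) * a n * s ^ (n - 1))
      = ∑ n ∈ Finset.range ℓ, ((ℓ : ℝ) - n) * a n * s ^ n := by
    rw [Finset.mul_sum, Finset.mul_sum, ← Finset.sum_sub_distrib, Finset.sum_range_succ]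
    have hlast : (ℓ : ℝ) * (a ℓ * s ^ ℓ) - s * ((ℓ : ℝ) * a ℓ * s ^ (ℓ - 1)) = 0 := by
      match ℓ with
      | 0 => simp
      | (j + 1) => show (((j:ℕ)+1 : ℕ) : ℝ) * (a (j+1) * s ^ (j+1)) - s * ((((j+1 : ℕ)) : ℝ) * a (j+1) * s ^ j) = 0; push_cast; ring
    rw [hlast, add_zero]
    apply Finset.sum_congr rfl
    intro n hn
    match n with
    | 0 => simp
    | (j + 1) => show (ℓ : ℝ) * (a (j+1) * s ^ (j+1)) - s * ((((j:ℕ)+1 : ℕ) : ℝ) * a (j+1) * s ^ j) = _; push_cast; ring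
  have expand :
      s * (∑ n ∈ Finset.range (ℓ + 1), (n : ℝ) * ((n - 1 : ℕ) : ℝ) * a n * s ^ (n - 1 - 1))
        + (1 + (m : ℝ) - s) * (∑ n ∈ Finset.range (ℓ + 1), (n : ℝ) * a n * s ^ (n - 1))
        + (ℓ : ℝ) * (∑ n ∈ Finset.range (ℓ + 1), a n * s ^ n)
      = (∑ n ∈ Finset.range ℓ, ((n : ℝ) - ℓ) * a n * s ^ n)
        + (∑ n ∈ Finset.range ℓ, ((ℓ : ℝ) - n) * a n * s ^ n) := by
    rw [← key s, ← key2]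
    ring
  rw [expand, ← Finset.sum_add_distrib]
  apply Finset.sum_eq_zero
  intro n _
  ring


noncomputable def gfun (B : ℝ) (k : ℤ) (ℓ : ℕ) (t : ℝ) : ℝ :=
  Real.exp (-(B * t) / 4) * Pkl k ℓ (B * t / 2)
noncomputable def gfun1 (B : ℝ) (k : ℤ) (ℓ : ℕ) (t : ℝ) : ℝ :=
  Real.exp (-(B * t) / 4) * (-(B / 4) * Pkl k ℓ (B * t / 2) + B / 2 * P1 k ℓ (B * t / 2))
noncomputable def gfun2 (B : ℝ) (k : ℤ) (ℓ : ℕ) (t : ℝ) : ℝ :=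
  Real.exp (-(B * t) / 4) *
    (B ^ 2 / 16 * Pkl k ℓ (B * t / 2) - B ^ 2 / 4 * P1 k ℓ (B * t / 2)
      + B ^ 2 / 4 * P2 k ℓ (B * t / 2))

lemma hasDerivAt_exp_part (B : ℝ) (t : ℝ) :
    HasDerivAt (fun t : ℝ => Real.exp (-(B * t) / 4)) (-(B / 4) * Real.exp (-(B * t) / 4)) t := by
  have h : HasDerivAt (fun t : ℝ => -(B * t) / 4) (-(B / 4)) t := by
    have h0 : HasDerivAt (fun t : ℝ => -(B / 4) * t) (-(B / 4)) t := by
      simpa using (hasDerivAt_id t).const_mul (-(B / 4))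
    convert h0 using 2 with y
    ring
  simpa [mul_comm] using h.exp

lemma hasDerivAt_arg (B : ℝ) (t : ℝ) :
    HasDerivAt (fun t : ℝ => B * t / 2) (B / 2) t := by
  have h0 : HasDerivAt (fun t : ℝ => B / 2 * t) (B / 2) t := by
    simpa using (hasDerivAt_id t).const_mul (B / 2)
  convert h0 using 2 with y
  ring

lemma hasDerivAt_gfun (B : ℝ) (k : ℤ) (ℓ : ℕ) (t : ℝ) :
    HasDerivAt (fun t => gfun B k ℓ t) (gfun1 B k ℓ t) t := by
  have hP : HasDerivAt (fun t : ℝ => Pkl k ℓ (B * t / 2)) (P1 k ℓ (B * t / 2) * (B / 2)) t :=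
    (hasDerivAt_Pkl k ℓ (B * t / 2)).comp (h := fun t => B * t / 2) t (hasDerivAt_arg B t)
  have := (hasDerivAt_exp_part B t).fun_mul hP
  unfold gfun gfun1
  exact this.congr_deriv (by ring)

lemma hasDerivAt_gfun1 (B : ℝ) (k : ℤ) (ℓ : ℕ) (t : ℝ) :
    HasDerivAt (fun t => gfun1 B k ℓ t) (gfun2 B k ℓ t) t := by
  have hP : HasDerivAt (fun t : ℝ => Pkl k ℓ (B * t / 2)) (P1 k ℓ (B * t / 2) * (B / 2)) t :=
    (hasDerivAt_Pkl k ℓ (B * t / 2)).comp (h := fun t => B * t / 2) t (hasDerivAt_arg B t)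
  have hP1 : HasDerivAt (fun t : ℝ => P1 k ℓ (B * t / 2)) (P2 k ℓ (B * t / 2) * (B / 2)) t :=
    (hasDerivAt_P1 k ℓ (B * t / 2)).comp (h := fun t => B * t / 2) t (hasDerivAt_arg B t)
  have hin : HasDerivAt
      (fun t : ℝ => -(B / 4) * Pkl k ℓ (B * t / 2) + B / 2 * P1 k ℓ (B * t / 2))
      (-(B / 4) * (P1 k ℓ (B * t / 2) * (B / 2)) + B / 2 * (P2 k ℓ (B * t / 2) * (B / 2))) t :=
    (hP.const_mul _).fun_add (hP1.const_mul _)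
  have := (hasDerivAt_exp_part B t).fun_mul hin
  unfold gfun1 gfun2
  exact this.congr_deriv (by ring)

lemma gode (B : ℝ) (k : ℤ) (ℓ : ℕ) (t : ℝ) :
    4 * t * gfun2 B k ℓ t + 4 * ((k.natAbs : ℝ) + 1) * gfun1 B k ℓ t
      + ((2 * (ℓ : ℝ) + 1 + (k.natAbs : ℝ)) * B - B ^ 2 / 4 * t) * gfun B k ℓ t = 0 := by
  have hk := kummer k ℓ (B * t / 2)
  unfold gfun gfun1 gfun2
  linear_combination (2 * B * Real.exp (-(B * t) / 4)) * hk


noncomputable def cc (k : ℤ) : ℂ := if 0 ≤ k then Complex.I else -Complex.I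

noncomputable def Wc (k : ℤ) (a b : ℝ) : ℂ := (a : ℂ) + cc k * (b : ℂ)

noncomputable def Fm (B : ℝ) (k : ℤ) (ℓ : ℕ) (a b : ℝ) : ℂ :=
  Wc k a b ^ k.natAbs * ((gfun B k ℓ (a ^ 2 + b ^ 2) : ℝ) : ℂ)

noncomputable def Fa (B : ℝ) (k : ℤ) (ℓ : ℕ) (a b : ℝ) : ℂ :=
  (k.natAbs : ℂ) * Wc k a b ^ (k.natAbs - 1) * ((gfun B k ℓ (a ^ 2 + b ^ 2) : ℝ) : ℂ)
    + Wc k a b ^ k.natAbs * ((2 * a * gfun1 B k ℓ (a ^ 2 + b ^ 2) : ℝ) : ℂ)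

noncomputable def Fb (B : ℝ) (k : ℤ) (ℓ : ℕ) (a b : ℝ) : ℂ :=
  cc k * (k.natAbs : ℂ) * Wc k a b ^ (k.natAbs - 1) * ((gfun B k ℓ (a ^ 2 + b ^ 2) : ℝ) : ℂ)
    + Wc k a b ^ k.natAbs * ((2 * b * gfun1 B k ℓ (a ^ 2 + b ^ 2) : ℝ) : ℂ)

noncomputable def Faa (B : ℝ) (k : ℤ) (ℓ : ℕ) (a b : ℝ) : ℂ :=
  (k.natAbs : ℂ) * ((k.natAbs - 1 : ℕ) : ℂ) * Wc k a b ^ (k.natAbs - 1 - 1) *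
      ((gfun B k ℓ (a ^ 2 + b ^ 2) : ℝ) : ℂ)
    + 2 * (k.natAbs : ℂ) * Wc k a b ^ (k.natAbs - 1) *
      ((2 * a * gfun1 B k ℓ (a ^ 2 + b ^ 2) : ℝ) : ℂ)
    + Wc k a b ^ k.natAbs *
      ((2 * gfun1 B k ℓ (a ^ 2 + b ^ 2) + 4 * a ^ 2 * gfun2 B k ℓ (a ^ 2 + b ^ 2) : ℝ) : ℂ)

noncomputable def Fbb (B : ℝ) (k : ℤ) (ℓ : ℕ) (a b : ℝ) : ℂ :=
  cc k ^ 2 * (k.natAbs : ℂ) * ((k.natAbs - 1 : ℕ) : ℂ) * Wc k a b ^ (k.natAbs - 1 - 1) *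
      ((gfun B k ℓ (a ^ 2 + b ^ 2) : ℝ) : ℂ)
    + 2 * cc k * (k.natAbs : ℂ) * Wc k a b ^ (k.natAbs - 1) *
      ((2 * b * gfun1 B k ℓ (a ^ 2 + b ^ 2) : ℝ) : ℂ)
    + Wc k a b ^ k.natAbs *
      ((2 * gfun1 B k ℓ (a ^ 2 + b ^ 2) + 4 * b ^ 2 * gfun2 B k ℓ (a ^ 2 + b ^ 2) : ℝ) : ℂ)

/-- derivative of `a ↦ Wc k a b ^ m` -/
lemma hasDerivAt_W_pow_fst (k : ℤ) (m : ℕ) (b : ℝ) (a : ℝ) :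
    HasDerivAt (fun a' : ℝ => Wc k a' b ^ m) ((m : ℂ) * Wc k a b ^ (m - 1)) a := by
  have he : HasDerivAt (fun z : ℂ => (z + cc k * b) ^ m)
      ((m : ℂ) * ((a : ℂ) + cc k * b) ^ (m - 1) * 1) ((a : ℂ)) :=
    ((hasDerivAt_id ((a : ℂ))).add_const (cc k * b)).pow m
  simpa [Wc] using he.comp_ofReal

lemma hasDerivAt_W_pow_snd (k : ℤ) (m : ℕ) (a : ℝ) (b : ℝ) :
    HasDerivAt (fun b' : ℝ => Wc k a b' ^ m) ((m : ℂ) * Wc k a b ^ (m - 1) * cc k) b := by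
  have he : HasDerivAt (fun z : ℂ => ((a : ℂ) + cc k * z) ^ m)
      ((m : ℂ) * ((a : ℂ) + cc k * b) ^ (m - 1) * cc k) ((b : ℂ)) := by
    have h1 : HasDerivAt (fun z : ℂ => (a : ℂ) + cc k * z) (cc k) ((b : ℂ)) := by
      simpa using ((hasDerivAt_id ((b : ℂ))).const_mul (cc k)).const_add ((a : ℂ))
    simpa using h1.fun_pow m
  simpa [Wc] using he.comp_ofReal

/-- derivative of `a ↦ g(a²+b²)` type terms -/
lemma hasDerivAt_sq_fst (b : ℝ) (a : ℝ) :
    HasDerivAt (fun a' : ℝ => a' ^ 2 + b ^ 2) (2 * a) a := by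
  simpa using (hasDerivAt_pow 2 a).add_const (b ^ 2)

lemma hasDerivAt_sq_snd (a : ℝ) (b : ℝ) :
    HasDerivAt (fun b' : ℝ => a ^ 2 + b' ^ 2) (2 * b) b := by
  simpa using ((hasDerivAt_pow 2 b).const_add (a ^ 2))

lemma hasDerivAt_Fm_fst (B : ℝ) (k : ℤ) (ℓ : ℕ) (b : ℝ) (a : ℝ) :
    HasDerivAt (fun a' : ℝ => Fm B k ℓ a' b) (Fa B k ℓ a b) a := by
  have hg : HasDerivAt (fun a' : ℝ => ((gfun B k ℓ (a' ^ 2 + b ^ 2) : ℝ) : ℂ))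
      (((2 * a * gfun1 B k ℓ (a ^ 2 + b ^ 2) : ℝ) : ℂ)) a := by
    have : HasDerivAt (fun a' : ℝ => gfun B k ℓ (a' ^ 2 + b ^ 2))
        (gfun1 B k ℓ (a ^ 2 + b ^ 2) * (2 * a)) a :=
      (hasDerivAt_gfun B k ℓ (a ^ 2 + b ^ 2)).comp (h := fun a' => a' ^ 2 + b ^ 2) a (hasDerivAt_sq_fst b a)
    have := this.ofReal_comp
    convert this using 1
    push_cast; ring
  have := (hasDerivAt_W_pow_fst k k.natAbs b a).fun_mul hg
  unfold Fm Fa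
  convert this using 1

lemma hasDerivAt_Fm_snd (B : ℝ) (k : ℤ) (ℓ : ℕ) (a : ℝ) (b : ℝ) :
    HasDerivAt (fun b' : ℝ => Fm B k ℓ a b') (Fb B k ℓ a b) b := by
  have hg : HasDerivAt (fun b' : ℝ => ((gfun B k ℓ (a ^ 2 + b' ^ 2) : ℝ) : ℂ))
      (((2 * b * gfun1 B k ℓ (a ^ 2 + b ^ 2) : ℝ) : ℂ)) b := by
    have : HasDerivAt (fun b' : ℝ => gfun B k ℓ (a ^ 2 + b' ^ 2))
        (gfun1 B k ℓ (a ^ 2 + b ^ 2) * (2 * b)) b :=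
      (hasDerivAt_gfun B k ℓ (a ^ 2 + b ^ 2)).comp (h := fun b' => a ^ 2 + b' ^ 2) b (hasDerivAt_sq_snd a b)
    have := this.ofReal_comp
    convert this using 1
    push_cast; ring
  have := (hasDerivAt_W_pow_snd k k.natAbs a b).fun_mul hg
  unfold Fm Fb
  exact this.congr_deriv (by ring)

lemma hasDerivAt_Fa_fst (B : ℝ) (k : ℤ) (ℓ : ℕ) (b : ℝ) (a : ℝ) :
    HasDerivAt (fun a' : ℝ => Fa B k ℓ a' b) (Faa B k ℓ a b) a := by
  have hg : HasDerivAt (fun a' : ℝ => ((gfun B k ℓ (a' ^ 2 + b ^ 2) : ℝ) : ℂ))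
      (((2 * a * gfun1 B k ℓ (a ^ 2 + b ^ 2) : ℝ) : ℂ)) a := by
    have : HasDerivAt (fun a' : ℝ => gfun B k ℓ (a' ^ 2 + b ^ 2))
        (gfun1 B k ℓ (a ^ 2 + b ^ 2) * (2 * a)) a :=
      (hasDerivAt_gfun B k ℓ (a ^ 2 + b ^ 2)).comp (h := fun a' => a' ^ 2 + b ^ 2) a (hasDerivAt_sq_fst b a)
    have := this.ofReal_comp
    convert this using 1
    push_cast; ring
  have hg1 : HasDerivAt (fun a' : ℝ => ((2 * a' * gfun1 B k ℓ (a' ^ 2 + b ^ 2) : ℝ) : ℂ))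
      (((2 * gfun1 B k ℓ (a ^ 2 + b ^ 2) + 4 * a ^ 2 * gfun2 B k ℓ (a ^ 2 + b ^ 2) : ℝ) : ℂ)) a := by
    have h1 : HasDerivAt (fun a' : ℝ => gfun1 B k ℓ (a' ^ 2 + b ^ 2))
        (gfun2 B k ℓ (a ^ 2 + b ^ 2) * (2 * a)) a :=
      (hasDerivAt_gfun1 B k ℓ (a ^ 2 + b ^ 2)).comp (h := fun a' => a' ^ 2 + b ^ 2) a (hasDerivAt_sq_fst b a)
    have h2 : HasDerivAt (fun a' : ℝ => 2 * a') 2 a := by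
      simpa using (hasDerivAt_id a).const_mul (2 : ℝ)
    have h3 := h2.fun_mul h1
    have := h3.ofReal_comp
    convert this using 1
    push_cast; ring
  have hterm1 := ((hasDerivAt_W_pow_fst k (k.natAbs - 1) b a).const_mul ((k.natAbs : ℂ))).fun_mul hg
  have hterm2 := (hasDerivAt_W_pow_fst k k.natAbs b a).fun_mul hg1
  have := hterm1.fun_add hterm2
  unfold Fa Faa
  exact this.congr_deriv (by push_cast; ring)

lemma hasDerivAt_Fb_snd (B : ℝ) (k : ℤ) (ℓ : ℕ) (a : ℝ) (b : ℝ) :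
    HasDerivAt (fun b' : ℝ => Fb B k ℓ a b') (Fbb B k ℓ a b) b := by
  have hg : HasDerivAt (fun b' : ℝ => ((gfun B k ℓ (a ^ 2 + b' ^ 2) : ℝ) : ℂ))
      (((2 * b * gfun1 B k ℓ (a ^ 2 + b ^ 2) : ℝ) : ℂ)) b := by
    have : HasDerivAt (fun b' : ℝ => gfun B k ℓ (a ^ 2 + b' ^ 2))
        (gfun1 B k ℓ (a ^ 2 + b ^ 2) * (2 * b)) b :=
      (hasDerivAt_gfun B k ℓ (a ^ 2 + b ^ 2)).comp (h := fun b' => a ^ 2 + b' ^ 2) b (hasDerivAt_sq_snd a b)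
    have := this.ofReal_comp
    convert this using 1
    push_cast; ring
  have hg1 : HasDerivAt (fun b' : ℝ => ((2 * b' * gfun1 B k ℓ (a ^ 2 + b' ^ 2) : ℝ) : ℂ))
      (((2 * gfun1 B k ℓ (a ^ 2 + b ^ 2) + 4 * b ^ 2 * gfun2 B k ℓ (a ^ 2 + b ^ 2) : ℝ) : ℂ)) b := by
    have h1 : HasDerivAt (fun b' : ℝ => gfun1 B k ℓ (a ^ 2 + b' ^ 2))
        (gfun2 B k ℓ (a ^ 2 + b ^ 2) * (2 * b)) b :=
      (hasDerivAt_gfun1 B k ℓ (a ^ 2 + b ^ 2)).comp (h := fun b' => a ^ 2 + b' ^ 2) b (hasDerivAt_sq_snd a b)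
    have h2 : HasDerivAt (fun b' : ℝ => 2 * b') 2 b := by
      simpa using (hasDerivAt_id b).const_mul (2 : ℝ)
    have h3 := h2.fun_mul h1
    have := h3.ofReal_comp
    convert this using 1
    push_cast; ring
  have hterm1 := ((hasDerivAt_W_pow_snd k (k.natAbs - 1) a b).const_mul
      (cc k * (k.natAbs : ℂ))).fun_mul hg
  have hterm2 := (hasDerivAt_W_pow_snd k k.natAbs a b).fun_mul hg1
  have := hterm1.fun_add hterm2
  unfold Fb Fbb
  exact this.congr_deriv (by push_cast; ring)


lemma Vkl_eq_Fm (B : ℝ) (k : ℤ) (ℓ : ℕ) (p : ℝ × ℝ) :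
    Vkl B k ℓ p = Fm B k ℓ p.1 p.2 := by
  obtain ⟨a, b⟩ := p
  simp only [Vkl, Fm, gfun, Wc]
  by_cases h : a ^ 2 + b ^ 2 = 0
  · have ha : a = 0 := by nlinarith [sq_nonneg a, sq_nonneg b]
    have hb : b = 0 := by nlinarith [sq_nonneg a, sq_nonneg b]
    subst ha; subst hb
    rcases eq_or_ne k 0 with hk | hk
    · subst hk
      norm_num
    · have hm : k.natAbs ≠ 0 := fun hc => hk (Int.natAbs_eq_zero.mp hc)
      norm_num [zero_pow hm]
  · have hpos : 0 < a ^ 2 + b ^ 2 := lt_of_le_of_ne (by positivity) (Ne.symm h)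
    set r : ℝ := Real.sqrt (a ^ 2 + b ^ 2) with hr
    have hrpos : 0 < r := Real.sqrt_pos.mpr hpos
    have hr2 : r ^ 2 = a ^ 2 + b ^ 2 := Real.sq_sqrt hpos.le
    have hrC : ((r : ℝ) : ℂ) ≠ 0 := by exact_mod_cast hrpos.ne'
    set z : ℂ := (a : ℂ) + (b : ℂ) * Complex.I with hz
    have hznz : z ≠ 0 := by
      intro hc
      rw [hz] at hc
      have ha : a = 0 := by simpa using congrArg Complex.re hc
      have hb : b = 0 := by simpa using congrArg Complex.im hc
      rw [ha, hb] at h; simp at h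
    have key : ((r ^ k.natAbs : ℝ) : ℂ) * (z / (r : ℂ)) ^ k
        = ((a : ℂ) + cc k * (b : ℂ)) ^ k.natAbs := by
      have hr2C : ((r : ℝ) : ℂ) ^ 2 = (a : ℂ) ^ 2 + (b : ℂ) ^ 2 := by
        exact_mod_cast congrArg (fun t : ℝ => (t : ℂ)) hr2
      have hzz : z * ((a : ℂ) - Complex.I * (b : ℂ)) = ((r : ℂ)) ^ 2 := by
        rw [hz]
        linear_combination (-(b : ℂ) ^ 2) * Complex.I_sq - hr2C
      rcases le_or_gt 0 k with hk | hk
      · have hcc : cc k = Complex.I := if_pos hk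
        obtain ⟨m, rfl⟩ : ∃ m : ℕ, k = (m : ℤ) := ⟨k.toNat, (Int.toNat_of_nonneg hk).symm⟩
        rw [hcc]
        simp only [Int.natAbs_natCast]
        rw [zpow_natCast, div_pow]
        push_cast
        rw [mul_comm, div_mul_cancel₀ _ (pow_ne_zero _ hrC)]
        congr 1
        rw [hz]; ring
      · have hcc : cc k = -Complex.I := if_neg (not_le.mpr hk)
        obtain ⟨m, rfl⟩ : ∃ m : ℕ, k = -(m : ℤ) := ⟨k.natAbs, by omega⟩
        rw [hcc]
        simp only [Int.natAbs_neg, Int.natAbs_natCast]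
        rw [zpow_neg, zpow_natCast, div_pow, inv_div]
        push_cast
        rw [mul_div_assoc']
        have hrr : ((r : ℂ)) ^ m * ((r : ℂ)) ^ m = (((r : ℂ)) ^ 2) ^ m := by ring
        rw [hrr, ← hzz, mul_pow, mul_comm (z ^ m), mul_div_assoc,
          div_self (pow_ne_zero _ hznz), mul_one]
        ring
    calc ((r ^ k.natAbs * Real.exp (-(B * (a ^ 2 + b ^ 2)) / 4) *
            Pkl k ℓ (B * (a ^ 2 + b ^ 2) / 2) : ℝ) : ℂ) * (z / (r : ℂ)) ^ k
        = (((r ^ k.natAbs : ℝ) : ℂ) * (z / (r : ℂ)) ^ k) *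
            ((Real.exp (-(B * (a ^ 2 + b ^ 2)) / 4) * Pkl k ℓ (B * (a ^ 2 + b ^ 2) / 2) : ℝ) : ℂ) := by
          push_cast; ring
      _ = _ := by rw [key]

lemma pde_alg (B : ℝ) (k : ℤ) (ℓ : ℕ) (a b : ℝ) :
    -(Faa B k ℓ a b + Fbb B k ℓ a b)
      + Complex.I * (B : ℂ) * ((a : ℂ) * Fb B k ℓ a b - (b : ℂ) * Fa B k ℓ a b)
      + ((B ^ 2 / 4 : ℝ) : ℂ) * ((a ^ 2 + b ^ 2 : ℝ) : ℂ) * Fm B k ℓ a b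
    = (((2 * (ℓ : ℝ) + 1 + (k.natAbs : ℝ) - (k : ℝ)) * B : ℝ) : ℂ) * Fm B k ℓ a b := by
  have h0 := gode B k ℓ (a ^ 2 + b ^ 2)
  have hgC := congrArg (fun r : ℝ => (r : ℂ)) h0
  push_cast at hgC
  set G : ℂ := ((gfun B k ℓ (a ^ 2 + b ^ 2) : ℝ) : ℂ) with hG
  set G1 : ℂ := ((gfun1 B k ℓ (a ^ 2 + b ^ 2) : ℝ) : ℂ) with hG1
  set G2 : ℂ := ((gfun2 B k ℓ (a ^ 2 + b ^ 2) : ℝ) : ℂ) with hG2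
  unfold Faa Fbb Fa Fb Fm Wc
  rcases le_or_gt 0 k with hk | hk
  · have hcc : cc k = Complex.I := if_pos hk
    have hkm : ((k : ℤ) : ℝ) = (k.natAbs : ℝ) := by
      rw [Nat.cast_natAbs, abs_of_nonneg hk]
    rw [hcc]
    push_cast [hkm]
    push_cast [hkm] at hgC ⊢
    rcases hm : k.natAbs with _ | _ | n
    · simp only [hm] at *
      push_cast at *
      linear_combination (-1 : ℂ) * hgC
    · simp only [hm] at *
      push_cast at *
      linear_combination (-((a : ℂ) + Complex.I * b)) * hgC
        + ((B : ℂ) * G * (a : ℂ)) * Complex.I_sq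
    · simp only [hm] at *
      push_cast at *
      linear_combination (-(((a : ℂ) + Complex.I * b) ^ (n + 2))) * hgC
        + (-(((n : ℂ) + 2) * ((n : ℂ) + 1) * G * ((a : ℂ) + Complex.I * b) ^ n)
            + (B : ℂ) * ((n : ℂ) + 2) * G * (a : ℂ) * ((a : ℂ) + Complex.I * b) ^ (n + 1))
          * Complex.I_sq
  · have hcc : cc k = -Complex.I := if_neg (not_le.mpr hk)
    have hkm : ((k : ℤ) : ℝ) = -(k.natAbs : ℝ) := by
      rw [Nat.cast_natAbs, abs_of_neg hk]; push_cast; ring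
    rw [hcc]
    push_cast [hkm]
    push_cast [hkm] at hgC ⊢
    rcases hm : k.natAbs with _ | _ | n
    · simp only [hm] at *
      push_cast at *
      linear_combination (-1 : ℂ) * hgC
    · simp only [hm] at *
      push_cast at *
      linear_combination (-((a : ℂ) + -Complex.I * b)) * hgC
        + (-((B : ℂ) * G * (a : ℂ))) * Complex.I_sq
    · simp only [hm] at *
      push_cast at *
      linear_combination (-(((a : ℂ) + -Complex.I * b) ^ (n + 2))) * hgC
        + (-(((n : ℂ) + 2) * ((n : ℂ) + 1) * G * ((a : ℂ) + -Complex.I * b) ^ n)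
            - (B : ℂ) * ((n : ℂ) + 2) * G * (a : ℂ) * ((a : ℂ) + -Complex.I * b) ^ (n + 1))
          * Complex.I_sq


lemma continuous_Pkl (k : ℤ) (ℓ : ℕ) : Continuous (fun s => Pkl k ℓ s) := by
  have : (fun s => Pkl k ℓ s) = fun s => ∑ n ∈ Finset.range (ℓ + 1), coefa k ℓ n * s ^ n :=
    funext fun s => Pkl_eq k ℓ s
  rw [this]
  exact continuous_finset_sum _ fun n _ => continuous_const.mul (continuous_pow n)

lemma continuous_gfun (B : ℝ) (k : ℤ) (ℓ : ℕ) : Continuous (fun t => gfun B k ℓ t) := by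
  unfold gfun
  exact (Real.continuous_exp.comp (by continuity)).mul
    ((continuous_Pkl k ℓ).comp (by continuity))

lemma continuous_Fm (B : ℝ) (k : ℤ) (ℓ : ℕ) :
    Continuous (fun p : ℝ × ℝ => Fm B k ℓ p.1 p.2) := by
  unfold Fm Wc
  apply Continuous.mul
  · exact (Continuous.add (Complex.continuous_ofReal.comp continuous_fst)
      (continuous_const.mul (Complex.continuous_ofReal.comp continuous_snd))).pow _
  · exact Complex.continuous_ofReal.comp ((continuous_gfun B k ℓ).comp (by continuity))

lemma norm_Wc_sq (k : ℤ) (a b : ℝ) : ‖Wc k a b‖ ^ 2 = a ^ 2 + b ^ 2 := by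
  rw [Complex.sq_norm]
  unfold Wc cc
  rcases le_or_gt 0 k with hk | hk
  · rw [if_pos hk]
    simp [Complex.normSq_apply]
    ring
  · rw [if_neg (not_le.mpr hk)]
    simp [Complex.normSq_apply]
    ring

lemma norm_Fm_sq (B : ℝ) (k : ℤ) (ℓ : ℕ) (a b : ℝ) :
    ‖Fm B k ℓ a b‖ ^ 2 = (a ^ 2 + b ^ 2) ^ k.natAbs * gfun B k ℓ (a ^ 2 + b ^ 2) ^ 2 := by
  unfold Fm
  rw [norm_mul, mul_pow, norm_pow, ← pow_mul, mul_comm k.natAbs 2, pow_mul, norm_Wc_sq]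
  congr 1
  rw [Complex.norm_real, Real.norm_eq_abs, sq_abs]

lemma pow_le_factorial_mul_exp (x : ℝ) (hx : 0 ≤ x) (N : ℕ) :
    x ^ N ≤ (N.factorial : ℝ) * Real.exp x := by
  have h1 : x ^ N / (N.factorial : ℝ) ≤ Real.exp x := by
    calc x ^ N / (N.factorial : ℝ)
        ≤ ∑ i ∈ Finset.range (N + 1), x ^ i / (i.factorial : ℝ) := by
          exact Finset.single_le_sum (f := fun i => x ^ i / (i.factorial : ℝ))
            (fun i _ => by positivity) (Finset.self_mem_range_succ N)
      _ ≤ Real.exp x := Real.sum_le_exp_of_nonneg hx (N + 1)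
  have hN : (0 : ℝ) < (N.factorial : ℝ) := by positivity
  calc x ^ N = x ^ N / (N.factorial : ℝ) * (N.factorial : ℝ) := by field_simp
    _ ≤ Real.exp x * (N.factorial : ℝ) := by
        apply mul_le_mul_of_nonneg_right h1 hN.le
    _ = (N.factorial : ℝ) * Real.exp x := by ring

lemma abs_Pkl_le (k : ℤ) (ℓ : ℕ) (s : ℝ) (hs : 0 ≤ s) :
    |Pkl k ℓ s| ≤ (∑ n ∈ Finset.range (ℓ + 1), |coefa k ℓ n|) * (1 + s) ^ ℓ := by
  rw [Pkl_eq, Finset.sum_mul]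
  refine (Finset.abs_sum_le_sum_abs _ _).trans (Finset.sum_le_sum fun n hn => ?_)
  rw [abs_mul, abs_pow]
  apply mul_le_mul_of_nonneg_left _ (abs_nonneg _)
  calc |s| ^ n = s ^ n := by rw [abs_of_nonneg hs]
    _ ≤ (1 + s) ^ n := pow_le_pow_left₀ hs (by linarith) n
    _ ≤ (1 + s) ^ ℓ := pow_le_pow_right₀ (by linarith) (by
        have := Finset.mem_range.mp hn; omega)

/-- uniform bound: `‖Fm‖² ≤ C e^{-Bt/4}` -/
lemma exists_bound (B : ℝ) (hB : 0 < B) (k : ℤ) (ℓ : ℕ) :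
    ∃ C : ℝ, ∀ a b : ℝ, ‖Fm B k ℓ a b‖ ^ 2
      ≤ C * (Real.exp (-(B / 4) * a ^ 2) * Real.exp (-(B / 4) * b ^ 2)) := by
  set K : ℝ := ∑ n ∈ Finset.range (ℓ + 1), |coefa k ℓ n| with hK
  have hK0 : 0 ≤ K := Finset.sum_nonneg fun n _ => abs_nonneg _
  set N : ℕ := k.natAbs + 2 * ℓ with hN
  refine ⟨K ^ 2 * (1 + B / 2) ^ (2 * ℓ) * ((N.factorial : ℝ) * (4 / B) ^ N * Real.exp (B / 4)),
    fun a b => ?_⟩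
  set t : ℝ := a ^ 2 + b ^ 2 with ht
  have ht0 : 0 ≤ t := by positivity
  rw [norm_Fm_sq, ← Real.exp_add]
  have hgsq : gfun B k ℓ t ^ 2 = Real.exp (-(B * t) / 2) * Pkl k ℓ (B * t / 2) ^ 2 := by
    have he : Real.exp (-(B * t) / 4) ^ 2 = Real.exp (-(B * t) / 2) := by
      rw [pow_two, ← Real.exp_add]; ring_nf
    unfold gfun
    rw [mul_pow, he]
  rw [hgsq]
  have hP : Pkl k ℓ (B * t / 2) ^ 2 ≤ K ^ 2 * (1 + B * t / 2) ^ (2 * ℓ) := by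
    have h1 : |Pkl k ℓ (B * t / 2)| ≤ K * (1 + B * t / 2) ^ ℓ :=
      abs_Pkl_le k ℓ _ (by positivity)
    calc Pkl k ℓ (B * t / 2) ^ 2 = |Pkl k ℓ (B * t / 2)| ^ 2 := (sq_abs _).symm
      _ ≤ (K * (1 + B * t / 2) ^ ℓ) ^ 2 := by
          apply pow_le_pow_left₀ (abs_nonneg _) h1
      _ = K ^ 2 * (1 + B * t / 2) ^ (2 * ℓ) := by rw [mul_pow, ← pow_mul, mul_comm ℓ 2]
  have hpoly : t ^ k.natAbs * (1 + B * t / 2) ^ (2 * ℓ)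
      ≤ (1 + B / 2) ^ (2 * ℓ) * (1 + t) ^ N := by
    have h1 : t ^ k.natAbs ≤ (1 + t) ^ k.natAbs := pow_le_pow_left₀ ht0 (by linarith) _
    have h2 : (1 + B * t / 2) ^ (2 * ℓ) ≤ ((1 + B / 2) * (1 + t)) ^ (2 * ℓ) := by
      apply pow_le_pow_left₀ (by positivity)
      nlinarith
    calc t ^ k.natAbs * (1 + B * t / 2) ^ (2 * ℓ)
        ≤ (1 + t) ^ k.natAbs * ((1 + B / 2) * (1 + t)) ^ (2 * ℓ) := by
          apply mul_le_mul h1 h2 (by positivity) (by positivity)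
      _ = (1 + B / 2) ^ (2 * ℓ) * (1 + t) ^ N := by
          rw [mul_pow, hN, pow_add]; ring
  have hexpN : (1 + t) ^ N ≤ (N.factorial : ℝ) * (4 / B) ^ N * Real.exp (B / 4) *
      Real.exp (B / 4 * t) := by
    have h1 : (B / 4 * (1 + t)) ^ N ≤ (N.factorial : ℝ) * Real.exp (B / 4 * (1 + t)) :=
      pow_le_factorial_mul_exp _ (by positivity) N
    have h2 : (1 + t) ^ N = (4 / B) ^ N * (B / 4 * (1 + t)) ^ N := by
      rw [← mul_pow]
      congr 1
      field_simp
    rw [h2]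
    calc (4 / B) ^ N * (B / 4 * (1 + t)) ^ N
        ≤ (4 / B) ^ N * ((N.factorial : ℝ) * Real.exp (B / 4 * (1 + t))) := by
          apply mul_le_mul_of_nonneg_left h1 (by positivity)
      _ = (N.factorial : ℝ) * (4 / B) ^ N * Real.exp (B / 4) * Real.exp (B / 4 * t) := by
          rw [mul_add, Real.exp_add, mul_one]
          ring
  have hfinal : -(B / 4) * a ^ 2 + -(B / 4) * b ^ 2 = -(B * t) / 2 + B / 4 * t := by
    rw [ht]; ring
  rw [hfinal, Real.exp_add]
  have hPnn : (0:ℝ) ≤ Pkl k ℓ (B * t / 2) ^ 2 := sq_nonneg _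
  have hexp2 : (0:ℝ) < Real.exp (-(B * t) / 2) := Real.exp_pos _
  calc t ^ k.natAbs * (Real.exp (-(B * t) / 2) * Pkl k ℓ (B * t / 2) ^ 2)
      ≤ t ^ k.natAbs * (Real.exp (-(B * t) / 2) * (K ^ 2 * (1 + B * t / 2) ^ (2 * ℓ))) := by
        apply mul_le_mul_of_nonneg_left _ (by positivity)
        exact mul_le_mul_of_nonneg_left hP hexp2.le
    _ = K ^ 2 * (t ^ k.natAbs * (1 + B * t / 2) ^ (2 * ℓ)) * Real.exp (-(B * t) / 2) := by ring
    _ ≤ K ^ 2 * ((1 + B / 2) ^ (2 * ℓ) * (1 + t) ^ N) * Real.exp (-(B * t) / 2) := by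
        apply mul_le_mul_of_nonneg_right _ hexp2.le
        exact mul_le_mul_of_nonneg_left hpoly (by positivity)
    _ ≤ K ^ 2 * ((1 + B / 2) ^ (2 * ℓ) * ((N.factorial : ℝ) * (4 / B) ^ N * Real.exp (B / 4) *
          Real.exp (B / 4 * t))) * Real.exp (-(B * t) / 2) := by
        apply mul_le_mul_of_nonneg_right _ hexp2.le
        apply mul_le_mul_of_nonneg_left _ (by positivity)
        exact mul_le_mul_of_nonneg_left hexpN (by positivity)
    _ = K ^ 2 * (1 + B / 2) ^ (2 * ℓ) * ((N.factorial : ℝ) * (4 / B) ^ N * Real.exp (B / 4)) *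
          (Real.exp (-(B * t) / 2) * Real.exp (B / 4 * t)) := by ring

lemma memLp_Fm (B : ℝ) (hB : 0 < B) (k : ℤ) (ℓ : ℕ) :
    MemLp (fun p : ℝ × ℝ => Fm B k ℓ p.1 p.2) 2 (volume : Measure (ℝ × ℝ)) := by
  have hmeas := (continuous_Fm B k ℓ).aestronglyMeasurable (μ := volume)
  rw [memLp_two_iff_integrable_sq_norm hmeas]
  obtain ⟨C, hC⟩ := exists_bound B hB k ℓ
  have hint : Integrable
      (fun p : ℝ × ℝ => C * (Real.exp (-(B / 4) * p.1 ^ 2) * Real.exp (-(B / 4) * p.2 ^ 2)))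
      (volume : Measure (ℝ × ℝ)) := by
    apply Integrable.const_mul
    rw [Measure.volume_eq_prod]
    exact (integrable_exp_neg_mul_sq (b := B / 4) (by linarith)).mul_prod
      (integrable_exp_neg_mul_sq (by linarith))
  apply hint.mono' (((continuous_Fm B k ℓ).norm.pow 2).aestronglyMeasurable)
  filter_upwards with p
  rw [Real.norm_eq_abs, abs_of_nonneg (by simp only [Pi.pow_apply]; positivity)]
  exact hC p.1 p.2

lemma Pkl_zero (k : ℤ) (ℓ : ℕ) : Pkl k ℓ 0 = 1 := by
  rw [Pkl_eq, Finset.sum_eq_single 0]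
  · simp [coefa, poch]
  · intro n _ hn
    rw [zero_pow hn, mul_zero]
  · intro h
    exact absurd (Finset.mem_range.mpr (Nat.succ_pos ℓ)) h

lemma exists_nonzero (B : ℝ) (hB : 0 < B) (k : ℤ) (ℓ : ℕ) :
    ∃ p : ℝ × ℝ, Fm B k ℓ p.1 p.2 ≠ 0 := by
  have hcont : ContinuousAt (fun s => Pkl k ℓ s) 0 := by
    have : Continuous (fun s => Pkl k ℓ s) := by
      have : (fun s => Pkl k ℓ s) = fun s => ∑ n ∈ Finset.range (ℓ + 1), coefa k ℓ n * s ^ n :=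
        funext fun s => Pkl_eq k ℓ s
      rw [this]
      exact continuous_finset_sum _ fun n _ => continuous_const.mul (continuous_pow n)
    exact this.continuousAt
  have h1 : Filter.Tendsto (fun s => Pkl k ℓ s) (nhds 0) (nhds 1) := by
    have := hcont.tendsto
    rwa [Pkl_zero] at this
  have h2 : ∀ᶠ s in nhds (0 : ℝ), 0 < Pkl k ℓ s :=
    h1.eventually (eventually_gt_nhds one_pos)
  rw [Metric.eventually_nhds_iff] at h2
  obtain ⟨ε, hε, hball⟩ := h2
  set t0 : ℝ := min (ε / B) 1 with ht0
  have ht0pos : 0 < t0 := lt_min (div_pos hε hB) one_pos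
  set a0 : ℝ := Real.sqrt t0 with ha0
  have ha0pos : 0 < a0 := Real.sqrt_pos.mpr ht0pos
  have ha0sq : a0 ^ 2 = t0 := Real.sq_sqrt ht0pos.le
  refine ⟨(a0, 0), ?_⟩
  have harg : dist (B * (a0 ^ 2 + 0 ^ 2) / 2) 0 < ε := by
    rw [Real.dist_eq, sub_zero, abs_of_nonneg (by positivity)]
    have h3 : a0 ^ 2 + 0 ^ 2 = t0 := by rw [ha0sq]; ring
    rw [h3]
    have : t0 ≤ ε / B := min_le_left _ _
    calc B * t0 / 2 ≤ B * (ε / B) / 2 := by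
          have := mul_le_mul_of_nonneg_left this hB.le
          linarith
      _ = ε / 2 := by field_simp
      _ < ε := by linarith
  have hP : 0 < Pkl k ℓ (B * (a0 ^ 2 + 0 ^ 2) / 2) := hball harg
  simp only [Fm, Wc, gfun]
  apply mul_ne_zero
  · apply pow_ne_zero
    simp only [Complex.ofReal_zero, mul_zero, add_zero]
    exact_mod_cast ha0pos.ne'
  · have : 0 < gfun B k ℓ (a0 ^ 2 + 0 ^ 2) := by
      unfold gfun
      positivity
    unfold gfun at this
    exact_mod_cast this.ne'


end Landau

/-- **Eigenfunctions and spectrum of the Landau Hamiltonian.** For every `k ∈ ℤ`, `ℓ ∈ ℕ`, the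
function `V_{k,ℓ}` is a nonzero element of `L²(ℝ²)` and satisfies, at every `x ≠ 0`,
`−ΔV + iB₀(x₁∂₂V − x₂∂₁V) + (B₀²/4)|x|²V = (2ℓ+1+|k|−k)B₀ · V`.  Moreover the set of these
eigenvalues equals the set of Landau levels `{(2n+1)B₀ : n ∈ ℕ}`. -/
theorem landau_eigenfunctions (B₀ : ℝ) (hB : 0 < B₀) :
    (∀ (k : ℤ) (ℓ : ℕ),
      MemLp (Vkl B₀ k ℓ) 2 (volume : Measure (ℝ × ℝ)) ∧
      ¬ (Vkl B₀ k ℓ =ᵐ[(volume : Measure (ℝ × ℝ))] 0) ∧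
      ∀ x : ℝ × ℝ, x ≠ 0 →
        -(deriv (fun a : ℝ => deriv (fun a' : ℝ => Vkl B₀ k ℓ (a', x.2)) a) x.1 +
            deriv (fun b : ℝ => deriv (fun b' : ℝ => Vkl B₀ k ℓ (x.1, b')) b) x.2)
          + Complex.I * (B₀ : ℂ) *
              ((x.1 : ℂ) * deriv (fun b : ℝ => Vkl B₀ k ℓ (x.1, b)) x.2 -
                (x.2 : ℂ) * deriv (fun a : ℝ => Vkl B₀ k ℓ (a, x.2)) x.1)
          + ((B₀ ^ 2 / 4 : ℝ) : ℂ) * ((x.1 ^ 2 + x.2 ^ 2 : ℝ) : ℂ) * Vkl B₀ k ℓ x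
        = (((2 * (ℓ : ℝ) + 1 + (k.natAbs : ℝ) - (k : ℝ)) * B₀ : ℝ) : ℂ) * Vkl B₀ k ℓ x) ∧
    {lam : ℝ | ∃ (k : ℤ) (ℓ : ℕ), lam = (2 * (ℓ : ℝ) + 1 + (k.natAbs : ℝ) - (k : ℝ)) * B₀} =
      {lam : ℝ | ∃ n : ℕ, lam = (2 * (n : ℝ) + 1) * B₀} := by
  constructor
  · intro k ℓ
    have hrepr : ∀ p : ℝ × ℝ, Vkl B₀ k ℓ p = Landau.Fm B₀ k ℓ p.1 p.2 := Landau.Vkl_eq_Fm B₀ k ℓ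
    have hVeq : Vkl B₀ k ℓ = fun p : ℝ × ℝ => Landau.Fm B₀ k ℓ p.1 p.2 := funext hrepr
    refine ⟨?_, ?_, ?_⟩
    · rw [hVeq]; exact Landau.memLp_Fm B₀ hB k ℓ
    · intro hae
      rw [hVeq] at hae
      have h0 := (Continuous.ae_eq_iff_eq volume (Landau.continuous_Fm B₀ k ℓ)
        continuous_const).mp hae
      obtain ⟨p0, hp0⟩ := Landau.exists_nonzero B₀ hB k ℓ
      exact hp0 (congrFun h0 p0)
    · intro x hx
      have e1 : (fun a' : ℝ => Vkl B₀ k ℓ (a', x.2)) = fun a' => Landau.Fm B₀ k ℓ a' x.2 :=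
        funext fun a' => hrepr (a', x.2)
      have e2 : (fun b' : ℝ => Vkl B₀ k ℓ (x.1, b')) = fun b' => Landau.Fm B₀ k ℓ x.1 b' :=
        funext fun b' => hrepr (x.1, b')
      rw [e1, e2, hrepr x]
      have d1 : (fun a : ℝ => deriv (fun a' : ℝ => Landau.Fm B₀ k ℓ a' x.2) a)
          = fun a => Landau.Fa B₀ k ℓ a x.2 :=
        funext fun a => (Landau.hasDerivAt_Fm_fst B₀ k ℓ x.2 a).deriv
      have d2 : (fun b : ℝ => deriv (fun b' : ℝ => Landau.Fm B₀ k ℓ x.1 b') b)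
          = fun b => Landau.Fb B₀ k ℓ x.1 b :=
        funext fun b => (Landau.hasDerivAt_Fm_snd B₀ k ℓ x.1 b).deriv
      rw [d1, d2]
      rw [(Landau.hasDerivAt_Fa_fst B₀ k ℓ x.2 x.1).deriv,
        (Landau.hasDerivAt_Fb_snd B₀ k ℓ x.1 x.2).deriv,
        (Landau.hasDerivAt_Fm_snd B₀ k ℓ x.1 x.2).deriv,
        (Landau.hasDerivAt_Fm_fst B₀ k ℓ x.2 x.1).deriv]
      exact Landau.pde_alg B₀ k ℓ x.1 x.2
  · ext lam
    simp only [Set.mem_setOf_eq]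
    constructor
    · rintro ⟨k, ℓ, rfl⟩
      refine ⟨ℓ + (-k).toNat, ?_⟩
      have hz : (k.natAbs : ℤ) - k = 2 * (-k).toNat := by omega
      have hzr := congrArg (fun z : ℤ => (z : ℝ)) hz
      push_cast at hzr
      congr 1
      push_cast [Nat.cast_natAbs]
      linarith
    · rintro ⟨n, rfl⟩
      exact ⟨0, n, by norm_num⟩
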